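/- Let f(t) be a generalized polynomial with nonnegative real coefficients and nonnegative rational exponents having common denominator r. For n ∈ ℤ>0 set f*_n(t) := Ψ(f(t)^n), where Ψ is the linear map rounding each exponent up to the nearest integer. Then for every real x > 0, the limit of f*_n(x)^(1/n) as n → ∞ exists and equals f(x). -/

import Mathlib

open Finsupp

/-- Evaluation of a generalized polynomial `∑ c_j t^j` (a finitely supported
function `ℚ →₀ ℝ`, with convolution product) at a positive real `x`, using
real exponentiation. -/
noncomputable def gpEval (f : AddMonoidAlgebra ℝ ℚ) (x : ℝ) : ℝ :=
  f.coeff.sum fun j c => c * x ^ (j : ℝ)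

/-- The linear rounding operator `Ψ` with `Ψ(t^j) = t^⌈j⌉`. -/
noncomputable def gpPsi (f : AddMonoidAlgebra ℝ ℚ) : AddMonoidAlgebra ℝ ℚ :=
  AddMonoidAlgebra.ofCoeff (Finsupp.mapDomain (fun j => (⌈j⌉ : ℚ)) f.coeff)

noncomputable def gpEvalHom (x : ℝ) (hx : 0 < x) : AddMonoidAlgebra ℝ ℚ →ₐ[ℝ] ℝ :=
  AddMonoidAlgebra.lift ℝ ℝ ℚ
    { toFun := fun j => x ^ ((Multiplicative.toAdd j : ℚ) : ℝ)
      map_one' := by simp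
      map_mul' := fun a b => by
        simp [Real.rpow_add hx, Rat.cast_add] }

lemma gpEval_eq (f : AddMonoidAlgebra ℝ ℚ) (x : ℝ) (hx : 0 < x) :
    gpEval f x = gpEvalHom x hx f := by
  rw [gpEvalHom, AddMonoidAlgebra.lift_apply]
  simp [gpEval, smul_eq_mul]

lemma gpEval_pow (f : AddMonoidAlgebra ℝ ℚ) (n : ℕ) (x : ℝ) (hx : 0 < x) :
    gpEval (f ^ n) x = gpEval f x ^ n := by
  rw [gpEval_eq _ _ hx, map_pow, ← gpEval_eq _ _ hx]

lemma coeff_mul_nonneg (f g : AddMonoidAlgebra ℝ ℚ) (hf : ∀ j, 0 ≤ f.coeff j)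
    (hg : ∀ j, 0 ≤ g.coeff j) : ∀ j, 0 ≤ (f * g).coeff j := by
  intro j
  rw [AddMonoidAlgebra.coeff_mul]
  refine Finset.sum_nonneg fun a _ => Finset.sum_nonneg fun b _ => ?_
  rcases eq_or_ne (a + b) j with h | h <;>
    simp [h, mul_nonneg (hf a) (hg b)]

lemma coeff_pow_nonneg (f : AddMonoidAlgebra ℝ ℚ) (hf : ∀ j, 0 ≤ f.coeff j) (n : ℕ) :
    ∀ j, 0 ≤ (f ^ n).coeff j := by
  induction n with
  | zero =>
    intro j
    rw [pow_zero]
    classical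
    rw [AddMonoidAlgebra.one_def, AddMonoidAlgebra.coeff_single, Finsupp.single_apply]
    split <;> norm_num
  | succ n ih =>
    rw [pow_succ]
    exact coeff_mul_nonneg _ _ ih hf

lemma gpEval_nonneg (g : AddMonoidAlgebra ℝ ℚ) (hg : ∀ j, 0 ≤ g.coeff j) (x : ℝ) (hx : 0 < x) :
    0 ≤ gpEval g x := by
  refine Finset.sum_nonneg fun j _ => mul_nonneg (hg j) (Real.rpow_nonneg hx.le _)

lemma rpow_ceil_bounds (x : ℝ) (hx : 0 < x) (j : ℚ) :
    min 1 x * x ^ (j : ℝ) ≤ x ^ ((⌈j⌉ : ℚ) : ℝ) ∧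
      x ^ ((⌈j⌉ : ℚ) : ℝ) ≤ max 1 x * x ^ (j : ℝ) := by
  have hd0 : (j : ℝ) ≤ ((⌈j⌉ : ℚ) : ℝ) := by exact_mod_cast Int.le_ceil j
  have hd1 : ((⌈j⌉ : ℚ) : ℝ) ≤ (j : ℝ) + 1 := by
    have := (Int.ceil_lt_add_one j).le
    exact_mod_cast this
  set d : ℝ := ((⌈j⌉ : ℚ) : ℝ) - (j : ℝ) with hdd
  have hsplit : x ^ ((⌈j⌉ : ℚ) : ℝ) = x ^ (d : ℝ) * x ^ (j : ℝ) := by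
    rw [← Real.rpow_add hx, hdd]; ring_nf
  have hxd : min 1 x ≤ x ^ d ∧ x ^ d ≤ max 1 x := by
    rcases le_total 1 x with h | h
    · constructor
      · calc min 1 x ≤ 1 := min_le_left _ _
          _ = x ^ (0:ℝ) := (Real.rpow_zero x).symm
          _ ≤ x ^ d := Real.rpow_le_rpow_of_exponent_le h (by simp only [hdd]; linarith)
      · calc x ^ d ≤ x ^ (1:ℝ) := Real.rpow_le_rpow_of_exponent_le h (by simp only [hdd]; linarith)
          _ = x := Real.rpow_one x
          _ ≤ max 1 x := le_max_right _ _
    · constructor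
      · calc min 1 x ≤ x := min_le_right _ _
          _ = x ^ (1:ℝ) := (Real.rpow_one x).symm
          _ ≤ x ^ d := Real.rpow_le_rpow_of_exponent_ge hx h (by simp only [hdd]; linarith)
      · calc x ^ d ≤ x ^ (0:ℝ) := Real.rpow_le_rpow_of_exponent_ge hx h (by simp only [hdd]; linarith)
          _ = 1 := Real.rpow_zero x
          _ ≤ max 1 x := le_max_left _ _
  constructor
  · rw [hsplit]
    exact mul_le_mul_of_nonneg_right hxd.1 (Real.rpow_nonneg hx.le _)
  · rw [hsplit]
    exact mul_le_mul_of_nonneg_right hxd.2 (Real.rpow_nonneg hx.le _)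

lemma gpEval_psi_eq (g : AddMonoidAlgebra ℝ ℚ) (x : ℝ) :
    gpEval (gpPsi g) x = g.coeff.sum fun j c => c * x ^ (((⌈j⌉ : ℚ)) : ℝ) := by
  rw [gpPsi, gpEval]
  exact Finsupp.sum_mapDomain_index (by simp) (by intros; ring)

lemma gpPsi_bounds (g : AddMonoidAlgebra ℝ ℚ) (hg : ∀ j, 0 ≤ g.coeff j) (x : ℝ) (hx : 0 < x) :
    min 1 x * gpEval g x ≤ gpEval (gpPsi g) x ∧
      gpEval (gpPsi g) x ≤ max 1 x * gpEval g x := by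
  rw [gpEval_psi_eq, gpEval, Finsupp.sum, Finsupp.sum, Finset.mul_sum, Finset.mul_sum]
  constructor
  · refine Finset.sum_le_sum fun j _ => ?_
    have := (rpow_ceil_bounds x hx j).1
    have hgj := hg j
    nlinarith [Real.rpow_nonneg hx.le (j:ℝ)]
  · refine Finset.sum_le_sum fun j _ => ?_
    have := (rpow_ceil_bounds x hx j).2
    have hgj := hg j
    nlinarith [Real.rpow_nonneg hx.le (j:ℝ)]

lemma aux_tendsto (c m : ℝ) (hc : 0 < c) (hm : 0 ≤ m) :
    Filter.Tendsto (fun n : ℕ => (c * m ^ n) ^ ((1 : ℝ) / n)) Filter.atTop (nhds m) := by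
  have h1 : Filter.Tendsto (fun n : ℕ => c ^ ((1 : ℝ) / n) * m) Filter.atTop (nhds m) := by
    have : Filter.Tendsto (fun n : ℕ => c ^ ((1 : ℝ) / n)) Filter.atTop (nhds 1) := by
      have hcont : Filter.Tendsto (fun y : ℝ => c ^ y) (nhds 0) (nhds 1) := by
        have := ((Real.continuousAt_const_rpow hc.ne' : ContinuousAt (fun y : ℝ => c ^ y) 0)).tendsto
        rwa [Real.rpow_zero] at this
      exact hcont.comp tendsto_one_div_atTop_nhds_zero_nat
    simpa using this.mul_const m
  refine h1.congr' ?_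
  filter_upwards [Filter.eventually_ge_atTop 1] with n hn
  have hn' : (n : ℝ) ≠ 0 := by positivity
  rw [Real.mul_rpow hc.le (pow_nonneg hm n), ← Real.rpow_natCast m n,
    ← Real.rpow_mul hm]
  congr 1
  rw [mul_one_div, div_self hn', Real.rpow_one]

theorem stmt_4 (r : ℕ) (hr : 0 < r) (f : AddMonoidAlgebra ℝ ℚ)
    (hexp : ∀ j ∈ f.coeff.support, ∃ i : ℕ, j = (i : ℚ) / r)
    (hpos : ∀ j, 0 ≤ f.coeff j)
    (x : ℝ) (hx : 0 < x) :
    Filter.Tendsto (fun n : ℕ => gpEval (gpPsi (f ^ n)) x ^ ((1 : ℝ) / n))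
      Filter.atTop (nhds (gpEval f x)) := by
  set m := gpEval f x with hm
  have hm0 : 0 ≤ m := gpEval_nonneg f hpos x hx
  have hcmin : 0 < min 1 x := lt_min one_pos hx
  have hcmax : 0 < max 1 x := lt_of_lt_of_le one_pos (le_max_left _ _)
  refine tendsto_of_tendsto_of_tendsto_of_le_of_le
    (aux_tendsto _ m hcmin hm0) (aux_tendsto _ m hcmax hm0) ?_ ?_
  · intro n
    have hb := (gpPsi_bounds (f ^ n) (coeff_pow_nonneg f hpos n) x hx).1
    rw [gpEval_pow f n x hx] at hb
    exact Real.rpow_le_rpow (mul_nonneg hcmin.le (pow_nonneg hm0 n)) hb (by positivity)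
  · intro n
    have hb := (gpPsi_bounds (f ^ n) (coeff_pow_nonneg f hpos n) x hx).2
    rw [gpEval_pow f n x hx] at hb
    have hb' := (gpPsi_bounds (f ^ n) (coeff_pow_nonneg f hpos n) x hx).1
    rw [gpEval_pow f n x hx] at hb'
    have h0 : 0 ≤ gpEval (gpPsi (f ^ n)) x :=
      le_trans (mul_nonneg hcmin.le (pow_nonneg hm0 n)) hb'
    exact Real.rpow_le_rpow h0 hb (by positivity)
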